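/- For every D > 0 there exists a constant C_b > 0, depending only on σ'_max, σ''_max and μ''_max, such that the map Θ = (A,b,C,d) ↦ (∂φ̃(Θ)/∂b_1, …, ∂φ̃(Θ)/∂b_ℓ) ∈ ℝ^ℓ is Lipschitz continuous on the set 𝒟 = {Θ : ‖Θ‖ ≤ D} with a Lipschitz constant L_b satisfying L_b² ≤ C_b · n² D² · max{ ℓ D² L_Z² , ℓ² D⁶ L_Z² , ℓ³ D⁴ , n ℓ }. -/

import Mathlib

open scoped BigOperators

/-- Index type for the upper-triangular entries of an `n × n` matrix
(a set of cardinality `n (n + 1) / 2`). -/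
abbrev UIdx (n : ℕ) : Type := {p : Fin n × Fin n // p.1 ≤ p.2}

/-- The operator `h` sending a symmetric matrix to the vector of
its upper-triangular entries. -/
def hv {n : ℕ} (S : Matrix (Fin n) (Fin n) ℝ) : UIdx n → ℝ :=
  fun p => S p.1.1 p.1.2

/-- Flattening index: entry `(i, s)` of an `n × k` matrix corresponds to
coordinate `i * k + s` of its row-by-row vectorization (the inverse of `g`). -/
def fidx {n k : ℕ} (i : Fin n) (s : Fin k) : Fin (n * k) :=
  ⟨i.1 * k + s.1, by
    calc i.1 * k + s.1 < i.1 * k + k := Nat.add_lt_add_left s.2 _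
      _ = (i.1 + 1) * k := by ring
      _ ≤ n * k := Nat.mul_le_mul (Nat.succ_le_of_lt i.2) le_rfl⟩

/-- `Z = A h(Σ) + b`. -/
noncomputable def Zv {n ℓ : ℕ} (S : Matrix (Fin n) (Fin n) ℝ)
    (A : Matrix (Fin ℓ) (UIdx n) ℝ) (b : Fin ℓ → ℝ) : Fin ℓ → ℝ :=
  fun i => A.mulVec (hv S) i + b i

/-- `X = C σ̃(Z) + d`. -/
noncomputable def Xv {n k ℓ : ℕ} (σ : ℝ → ℝ) (S : Matrix (Fin n) (Fin n) ℝ)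
    (A : Matrix (Fin ℓ) (UIdx n) ℝ) (b : Fin ℓ → ℝ)
    (C : Matrix (Fin (n * k)) (Fin ℓ) ℝ) (d : Fin (n * k) → ℝ) :
    Fin (n * k) → ℝ :=
  fun ν => C.mulVec (fun i => σ (Zv S A b i)) ν + d ν

/-- `ω i j = [g(X) g(X)ᵀ − Σ]_{i,j}`. -/
noncomputable def omE {n k ℓ : ℕ} (σ : ℝ → ℝ) (S : Matrix (Fin n) (Fin n) ℝ)
    (A : Matrix (Fin ℓ) (UIdx n) ℝ) (b : Fin ℓ → ℝ)
    (C : Matrix (Fin (n * k)) (Fin ℓ) ℝ) (d : Fin (n * k) → ℝ)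
    (i j : Fin n) : ℝ :=
  (∑ s : Fin k, Xv σ S A b C d (fidx i s) * Xv σ S A b C d (fidx j s)) - S i j

/-- The single-layer objective `φ̃(Θ) = Σ_{i,j} μ(ω_{i,j})`. -/
noncomputable def phiT {n k ℓ : ℕ} (σ μ : ℝ → ℝ) (S : Matrix (Fin n) (Fin n) ℝ)
    (A : Matrix (Fin ℓ) (UIdx n) ℝ) (b : Fin ℓ → ℝ)
    (C : Matrix (Fin (n * k)) (Fin ℓ) ℝ) (d : Fin (n * k) → ℝ) : ℝ :=
  ∑ i : Fin n, ∑ j : Fin n, μ (omE σ S A b C d i j)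
/-- Partial derivative of `φ̃` with respect to the bias entry `b_ι`. -/
noncomputable def gbv {n k ℓ : ℕ} (σ μ : ℝ → ℝ) (S : Matrix (Fin n) (Fin n) ℝ)
    (A : Matrix (Fin ℓ) (UIdx n) ℝ) (b : Fin ℓ → ℝ)
    (C : Matrix (Fin (n * k)) (Fin ℓ) ℝ) (d : Fin (n * k) → ℝ) (ι : Fin ℓ) : ℝ :=
  deriv (fun t : ℝ => phiT σ μ S A (b + t • (Pi.single ι 1 : Fin ℓ → ℝ)) C d) 0

/-- Partial derivative of `φ̃` with respect to the weight entry `A_{ι,η}`. -/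
noncomputable def gAv {n k ℓ : ℕ} (σ μ : ℝ → ℝ) (S : Matrix (Fin n) (Fin n) ℝ)
    (A : Matrix (Fin ℓ) (UIdx n) ℝ) (b : Fin ℓ → ℝ)
    (C : Matrix (Fin (n * k)) (Fin ℓ) ℝ) (d : Fin (n * k) → ℝ)
    (ι : Fin ℓ) (η : UIdx n) : ℝ :=
  deriv (fun t : ℝ => phiT σ μ S (A + t • Matrix.single ι η 1) b C d) 0

/-- Partial derivative of `φ̃` with respect to the weight entry `C_{ν,ι}`. -/
noncomputable def gCv {n k ℓ : ℕ} (σ μ : ℝ → ℝ) (S : Matrix (Fin n) (Fin n) ℝ)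
    (A : Matrix (Fin ℓ) (UIdx n) ℝ) (b : Fin ℓ → ℝ)
    (C : Matrix (Fin (n * k)) (Fin ℓ) ℝ) (d : Fin (n * k) → ℝ)
    (ν : Fin (n * k)) (ι : Fin ℓ) : ℝ :=
  deriv (fun t : ℝ => phiT σ μ S A b (C + t • Matrix.single ν ι 1) d) 0

/-- Partial derivative of `φ̃` with respect to the bias entry `d_ν`. -/
noncomputable def gdv {n k ℓ : ℕ} (σ μ : ℝ → ℝ) (S : Matrix (Fin n) (Fin n) ℝ)
    (A : Matrix (Fin ℓ) (UIdx n) ℝ) (b : Fin ℓ → ℝ)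
    (C : Matrix (Fin (n * k)) (Fin ℓ) ℝ) (d : Fin (n * k) → ℝ)
    (ν : Fin (n * k)) : ℝ :=
  deriv (fun t : ℝ => phiT σ μ S A b C (d + t • (Pi.single ν 1 : Fin (n * k) → ℝ))) 0

/-- Squared Frobenius-type norm of the parameter tuple `Θ = (A, b, C, d)`. -/
noncomputable def pns {n k ℓ : ℕ}
    (A : Matrix (Fin ℓ) (UIdx n) ℝ) (b : Fin ℓ → ℝ)
    (C : Matrix (Fin (n * k)) (Fin ℓ) ℝ) (d : Fin (n * k) → ℝ) : ℝ :=
  (∑ ι, ∑ η, A ι η ^ 2) + (∑ ι, b ι ^ 2) + (∑ ν, ∑ ι, C ν ι ^ 2) + ∑ ν, d ν ^ 2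

lemma sum_fidx {n k : ℕ} (F : Fin (n*k) → ℝ) :
    ∑ i : Fin n, ∑ s : Fin k, F (fidx i s) = ∑ ν, F ν := by
  have h : ∑ ν, F ν = ∑ p : Fin n × Fin k, F (finProdFinEquiv p) :=
    (Equiv.sum_comp _ F).symm
  rw [h, Fintype.sum_prod_type]
  refine Finset.sum_congr rfl fun i _ => Finset.sum_congr rfl fun s _ => ?_
  congr 1
  ext
  simp only [fidx, finProdFinEquiv_apply_val]
  ring

lemma gbv_formula {n k ℓ : ℕ} (σ σ' μ μ' : ℝ → ℝ)
    (hσ : ∀ t, HasDerivAt σ (σ' t) t) (hμ : ∀ t, HasDerivAt μ (μ' t) t)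
    (S : Matrix (Fin n) (Fin n) ℝ) (A : Matrix (Fin ℓ) (UIdx n) ℝ) (b : Fin ℓ → ℝ)
    (C : Matrix (Fin (n * k)) (Fin ℓ) ℝ) (d : Fin (n * k) → ℝ) (ι : Fin ℓ) :
    gbv σ μ S A b C d ι =
      σ' (Zv S A b ι) * ∑ i : Fin n, ∑ j : Fin n, μ' (omE σ S A b C d i j) *
        (∑ s : Fin k, (C (fidx i s) ι * Xv σ S A b C d (fidx j s)
          + Xv σ S A b C d (fidx i s) * C (fidx j s) ι)) := by
  set e : Fin ℓ → ℝ := Pi.single ι 1 with he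
  have hb0 : b + (0:ℝ) • e = b := by simp
  have hZ : ∀ i, HasDerivAt (fun t : ℝ => Zv S A (b + t • e) i) (e i) 0 := by
    intro i
    have h1 : (fun t : ℝ => Zv S A (b + t • e) i)
        = fun t : ℝ => (A.mulVec (hv S) i + b i) + t * e i := by
      funext t; simp [Zv]; ring
    rw [h1]
    simpa using ((hasDerivAt_id (0:ℝ)).mul_const (e i)).const_add (A.mulVec (hv S) i + b i)
  have hY : ∀ i, HasDerivAt (fun t : ℝ => σ (Zv S A (b + t • e) i))
      (σ' (Zv S A b i) * e i) 0 := by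
    intro i
    have h0 : Zv S A (b + (0:ℝ) • e) i = Zv S A b i := by rw [hb0]
    have := (hσ (Zv S A (b + (0:ℝ) • e) i)).comp (0:ℝ) (hZ i)
    simpa [h0, Function.comp_def] using this
  have hX : ∀ ν, HasDerivAt (fun t : ℝ => Xv σ S A (b + t • e) C d ν)
      (C ν ι * σ' (Zv S A b ι)) 0 := by
    intro ν
    have h1 : (fun t : ℝ => Xv σ S A (b + t • e) C d ν)
        = fun t : ℝ => (∑ i, C ν i * σ (Zv S A (b + t • e) i)) + d ν := by
      funext t; simp [Xv, Matrix.mulVec, dotProduct]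
    rw [h1]
    have h2 : HasDerivAt (fun t : ℝ => ∑ i, C ν i * σ (Zv S A (b + t • e) i))
        (∑ i, C ν i * (σ' (Zv S A b i) * e i)) 0 :=
      HasDerivAt.fun_sum (fun i _ => (hY i).const_mul (C ν i))
    have h3 : (∑ i, C ν i * (σ' (Zv S A b i) * e i)) = C ν ι * σ' (Zv S A b ι) := by
      simp [he, Pi.single_apply, mul_ite]
    exact h3 ▸ h2.add_const (d ν)
  have hω : ∀ i j, HasDerivAt (fun t : ℝ => omE σ S A (b + t • e) C d i j)
      (∑ s : Fin k, (C (fidx i s) ι * σ' (Zv S A b ι) * Xv σ S A b C d (fidx j s)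
        + Xv σ S A b C d (fidx i s) * (C (fidx j s) ι * σ' (Zv S A b ι)))) 0 := by
    intro i j
    have h2 : HasDerivAt (fun t : ℝ =>
        ∑ s : Fin k, Xv σ S A (b + t • e) C d (fidx i s) * Xv σ S A (b + t • e) C d (fidx j s))
        (∑ s : Fin k, (C (fidx i s) ι * σ' (Zv S A b ι) * Xv σ S A b C d (fidx j s)
          + Xv σ S A b C d (fidx i s) * (C (fidx j s) ι * σ' (Zv S A b ι)))) 0 := by
      refine HasDerivAt.fun_sum fun s _ => ?_
      have := (hX (fidx i s)).fun_mul (hX (fidx j s))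
      simpa [hb0] using this
    exact h2.sub_const (S i j)
  have hφ : HasDerivAt (fun t : ℝ => phiT σ μ S A (b + t • e) C d)
      (∑ i : Fin n, ∑ j : Fin n, μ' (omE σ S A b C d i j) *
        (∑ s : Fin k, (C (fidx i s) ι * σ' (Zv S A b ι) * Xv σ S A b C d (fidx j s)
          + Xv σ S A b C d (fidx i s) * (C (fidx j s) ι * σ' (Zv S A b ι))))) 0 := by
    refine HasDerivAt.fun_sum fun i _ => HasDerivAt.fun_sum fun j _ => ?_
    have h0 : omE σ S A (b + (0:ℝ) • e) C d i j = omE σ S A b C d i j := by rw [hb0]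
    have := (hμ (omE σ S A (b + (0:ℝ) • e) C d i j)).comp (0:ℝ) (hω i j)
    simpa [h0, Function.comp_def] using this
  rw [gbv, hφ.deriv]
  simp only [Finset.mul_sum]
  exact Finset.sum_congr rfl fun i _ => Finset.sum_congr rfl fun j _ =>
    (Finset.sum_congr rfl fun s _ => by ring)

lemma lip_of_deriv {f f' : ℝ → ℝ} (h : ∀ t, HasDerivAt f (f' t) t) {K : ℝ}
    (hK : ∀ t, |f' t| ≤ K) (a b : ℝ) : |f a - f b| ≤ K * |a - b| := by
  have := Convex.norm_image_sub_le_of_norm_hasDerivWithin_le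
    (f := f) (f' := f') (s := Set.univ) (C := K)
    (fun x _ => (h x).hasDerivWithinAt) (fun x _ => by simpa using hK x)
    convex_univ (Set.mem_univ b) (Set.mem_univ a)
  simpa [Real.norm_eq_abs] using this

lemma sq_lip {f f' : ℝ → ℝ} (h : ∀ t, HasDerivAt f (f' t) t) {K : ℝ}
    (hK : ∀ t, |f' t| ≤ K) (a b : ℝ) : (f a - f b) ^ 2 ≤ K ^ 2 * (a - b) ^ 2 := by
  have h1 := lip_of_deriv h hK a b
  have h2 := abs_nonneg (f a - f b)
  have h3 := abs_nonneg (a - b)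
  nlinarith [sq_abs (f a - f b), sq_abs (a - b),
    mul_le_mul h1 h1 h2 (h2.trans h1)]

lemma cs_double {α β : Type*} [Fintype α] [Fintype β] (f g : α → β → ℝ) :
    (∑ i, ∑ s, f i s * g i s) ^ 2 ≤ (∑ i, ∑ s, f i s ^ 2) * (∑ i, ∑ s, g i s ^ 2) := by
  have h := Finset.sum_mul_sq_le_sq_mul_sq Finset.univ
    (fun p : α × β => f p.1 p.2) (fun p => g p.1 p.2)
  simpa [Fintype.sum_prod_type] using h

lemma sum_sq_mulsum {α β : Type*} [Fintype α] [Fintype β] (f : α → β → ℝ) (g : β → ℝ) :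
    ∑ a, (∑ b, f a b * g b) ^ 2 ≤ (∑ a, ∑ b, f a b ^ 2) * (∑ b, g b ^ 2) := by
  calc ∑ a, (∑ b, f a b * g b) ^ 2
      ≤ ∑ a, (∑ b, f a b ^ 2) * (∑ b, g b ^ 2) :=
        Finset.sum_le_sum fun a _ => Finset.sum_mul_sq_le_sq_mul_sq _ _ _
    _ = _ := by rw [← Finset.sum_mul]

lemma sum_sq_mulsum2 {α β γ : Type*} [Fintype α] [Fintype β] [Fintype γ]
    (f : α → β → γ → ℝ) (g : β → γ → ℝ) :
    ∑ a, (∑ b, ∑ c, f a b c * g b c) ^ 2 ≤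
      (∑ a, ∑ b, ∑ c, f a b c ^ 2) * (∑ b, ∑ c, g b c ^ 2) := by
  have h := sum_sq_mulsum (fun a (p : β × γ) => f a p.1 p.2) (fun p => g p.1 p.2)
  simpa [Fintype.sum_prod_type] using h

lemma sum_sq_double {α β γ : Type*} [Fintype α] [Fintype β] [Fintype γ]
    (ρ : α → γ → ℝ) (x : γ → β → ℝ) :
    ∑ i, ∑ s, (∑ j, ρ i j * x j s) ^ 2 ≤
      (∑ i, ∑ j, ρ i j ^ 2) * (∑ j, ∑ s, x j s ^ 2) := by
  calc ∑ i, ∑ s, (∑ j, ρ i j * x j s) ^ 2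
      ≤ ∑ i, ∑ s, (∑ j, ρ i j ^ 2) * (∑ j, x j s ^ 2) :=
        Finset.sum_le_sum fun i _ => Finset.sum_le_sum fun s _ =>
          Finset.sum_mul_sq_le_sq_mul_sq _ _ _
    _ = ∑ i, (∑ j, ρ i j ^ 2) * (∑ s, ∑ j, x j s ^ 2) := by
        refine Finset.sum_congr rfl fun i _ => ?_
        rw [← Finset.mul_sum]
    _ = (∑ i, ∑ j, ρ i j ^ 2) * (∑ s, ∑ j, x j s ^ 2) := by rw [← Finset.sum_mul]
    _ = _ := by
        congr 1
        exact Finset.sum_comm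


lemma sum_sq_pair {α β γ : Type*} [Fintype α] [Fintype β] [Fintype γ]
    (f : α → γ → ℝ) (g : β → γ → ℝ) :
    ∑ i, ∑ j, (∑ s, f i s * g j s) ^ 2 ≤
      (∑ i, ∑ s, f i s ^ 2) * (∑ j, ∑ s, g j s ^ 2) := by
  calc ∑ i, ∑ j, (∑ s, f i s * g j s) ^ 2
      ≤ ∑ i, ∑ j, (∑ s, f i s ^ 2) * (∑ s, g j s ^ 2) :=
        Finset.sum_le_sum fun i _ => Finset.sum_le_sum fun j _ =>
          Finset.sum_mul_sq_le_sq_mul_sq _ _ _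
    _ = _ := by
        rw [Finset.sum_mul_sum]

lemma two_split {α : Type*} [Fintype α] (f g : α → ℝ) :
    ∑ a, (f a + g a) ^ 2 ≤ 2 * ∑ a, f a ^ 2 + 2 * ∑ a, g a ^ 2 := by
  have h : ∑ a, (f a + g a) ^ 2 ≤ ∑ a, (2 * f a ^ 2 + 2 * g a ^ 2) :=
    Finset.sum_le_sum fun a _ => by nlinarith [sq_nonneg (f a - g a)]
  calc ∑ a, (f a + g a) ^ 2 ≤ ∑ a, (2 * f a ^ 2 + 2 * g a ^ 2) := h
    _ = 2 * ∑ a, f a ^ 2 + 2 * ∑ a, g a ^ 2 := by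
        rw [Finset.sum_add_distrib, ← Finset.mul_sum, ← Finset.mul_sum]

lemma two_split2 {α β : Type*} [Fintype α] [Fintype β] (f g : α → β → ℝ) :
    ∑ a, ∑ b, (f a b + g a b) ^ 2 ≤
      2 * (∑ a, ∑ b, f a b ^ 2) + 2 * ∑ a, ∑ b, g a b ^ 2 := by
  have h := two_split (fun p : α × β => f p.1 p.2) (fun p => g p.1 p.2)
  simpa [Fintype.sum_prod_type] using h

lemma three_split {α : Type*} [Fintype α] (f g h : α → ℝ) :
    ∑ a, (f a + g a + h a) ^ 2 ≤
      3 * ∑ a, f a ^ 2 + 3 * ∑ a, g a ^ 2 + 3 * ∑ a, h a ^ 2 := by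
  have h1 : ∑ a, (f a + g a + h a) ^ 2
      ≤ ∑ a, (3 * f a ^ 2 + 3 * g a ^ 2 + 3 * h a ^ 2) :=
    Finset.sum_le_sum fun a _ => by
      nlinarith [sq_nonneg (f a - g a), sq_nonneg (f a - h a), sq_nonneg (g a - h a)]
  calc ∑ a, (f a + g a + h a) ^ 2
      ≤ ∑ a, (3 * f a ^ 2 + 3 * g a ^ 2 + 3 * h a ^ 2) := h1
    _ = _ := by
        rw [Finset.sum_add_distrib, Finset.sum_add_distrib,
          ← Finset.mul_sum, ← Finset.mul_sum, ← Finset.mul_sum]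

lemma sum_mul_diff {α : Type*} [Fintype α] (f f' g g' : α → ℝ) :
    (∑ a, f a * g a) - ∑ a, f' a * g' a =
      (∑ a, (f a - f' a) * g a) + ∑ a, f' a * (g a - g' a) := by
  rw [← Finset.sum_add_distrib, ← Finset.sum_sub_distrib]
  exact Finset.sum_congr rfl fun a _ => by ring

lemma sum_mul_diff2 {α β : Type*} [Fintype α] [Fintype β] (f f' g g' : α → β → ℝ) :
    (∑ a, ∑ b, f a b * g a b) - ∑ a, ∑ b, f' a b * g' a b =
      (∑ a, ∑ b, (f a b - f' a b) * g a b) + ∑ a, ∑ b, f' a b * (g a b - g' a b) := by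
  have h := sum_mul_diff (fun p : α × β => f p.1 p.2) (fun p => f' p.1 p.2)
    (fun p => g p.1 p.2) (fun p => g' p.1 p.2)
  simpa [Fintype.sum_prod_type] using h

lemma reorg {α β : Type*} [Fintype α] [Fintype β] (ρ : α → α → ℝ) (c x : α → β → ℝ) :
    ∑ i, ∑ j, ρ i j * (∑ s, (c i s * x j s + x i s * c j s)) =
      (∑ i, ∑ s, c i s * ∑ j, ρ i j * x j s) +
        (∑ j, ∑ s, c j s * ∑ i, ρ i j * x i s) := by
  simp only [mul_add, Finset.mul_sum, Finset.sum_add_distrib]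
  congr 1
  · refine Finset.sum_congr rfl fun i _ => ?_
    rw [Finset.sum_comm]
    exact Finset.sum_congr rfl fun s _ => Finset.sum_congr rfl fun j _ => by ring
  · rw [Finset.sum_comm]
    refine Finset.sum_congr rfl fun j _ => ?_
    rw [Finset.sum_comm]
    exact Finset.sum_congr rfl fun s _ => Finset.sum_congr rfl fun i _ => by ring

/-- `w i s = ∑ j ρ i j X_{j s}`. -/
noncomputable def wf {n k ℓ : ℕ} (σ μ' : ℝ → ℝ) (S : Matrix (Fin n) (Fin n) ℝ)
    (A : Matrix (Fin ℓ) (UIdx n) ℝ) (b : Fin ℓ → ℝ)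
    (C : Matrix (Fin (n * k)) (Fin ℓ) ℝ) (d : Fin (n * k) → ℝ) :
    Fin n → Fin k → ℝ :=
  fun i s => ∑ j, μ' (omE σ S A b C d i j) * Xv σ S A b C d (fidx j s)

/-- `w' j s = ∑ i ρ i j X_{i s}`. -/
noncomputable def wg {n k ℓ : ℕ} (σ μ' : ℝ → ℝ) (S : Matrix (Fin n) (Fin n) ℝ)
    (A : Matrix (Fin ℓ) (UIdx n) ℝ) (b : Fin ℓ → ℝ)
    (C : Matrix (Fin (n * k)) (Fin ℓ) ℝ) (d : Fin (n * k) → ℝ) :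
    Fin n → Fin k → ℝ :=
  fun j s => ∑ i, μ' (omE σ S A b C d i j) * Xv σ S A b C d (fidx i s)

noncomputable def Wf {n k ℓ : ℕ} (σ μ' : ℝ → ℝ) (S : Matrix (Fin n) (Fin n) ℝ)
    (A : Matrix (Fin ℓ) (UIdx n) ℝ) (b : Fin ℓ → ℝ)
    (C : Matrix (Fin (n * k)) (Fin ℓ) ℝ) (d : Fin (n * k) → ℝ) :
    Fin ℓ → ℝ :=
  fun ι => (∑ i, ∑ s, C (fidx i s) ι * wf σ μ' S A b C d i s) +
    ∑ j, ∑ s, C (fidx j s) ι * wg σ μ' S A b C d j s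

lemma gbv_W {n k ℓ : ℕ} (σ σ' μ μ' : ℝ → ℝ)
    (hσ : ∀ t, HasDerivAt σ (σ' t) t) (hμ : ∀ t, HasDerivAt μ (μ' t) t)
    (S : Matrix (Fin n) (Fin n) ℝ) (A : Matrix (Fin ℓ) (UIdx n) ℝ) (b : Fin ℓ → ℝ)
    (C : Matrix (Fin (n * k)) (Fin ℓ) ℝ) (d : Fin (n * k) → ℝ) (ι : Fin ℓ) :
    gbv σ μ S A b C d ι = σ' (Zv S A b ι) * Wf σ μ' S A b C d ι := by
  rw [gbv_formula σ σ' μ μ' hσ hμ]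
  congr 1
  have h := reorg (fun i j => μ' (omE σ S A b C d i j))
    (fun i s => C (fidx i s) ι) (fun j s => Xv σ S A b C d (fidx j s))
  simpa [Wf, wf, wg] using h

lemma sq_le_one_of_abs_le_one {x : ℝ} (h : |x| ≤ 1) : x ^ 2 ≤ 1 := by
  nlinarith [abs_nonneg x, sq_abs x]

lemma sq_le_sq_of_abs_le {x K : ℝ} (h : |x| ≤ K) : x ^ 2 ≤ K ^ 2 := by
  nlinarith [abs_nonneg x, sq_abs x]


set_option maxHeartbeats 1000000 in
lemma pns_comps {n k ℓ : ℕ} (A : Matrix (Fin ℓ) (UIdx n) ℝ) (b : Fin ℓ → ℝ)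
    (C : Matrix (Fin (n * k)) (Fin ℓ) ℝ) (d : Fin (n * k) → ℝ) {B : ℝ}
    (h : Real.sqrt (pns A b C d) ≤ B) :
    (∑ ι, ∑ η, A ι η ^ 2) ≤ B ^ 2 ∧ (∑ ι, b ι ^ 2) ≤ B ^ 2 ∧
    (∑ ν, ∑ ι, C ν ι ^ 2) ≤ B ^ 2 ∧ (∑ ν, d ν ^ 2) ≤ B ^ 2 := by
  have h0 : 0 ≤ pns A b C d := by unfold pns; positivity
  have h1 : pns A b C d ≤ B ^ 2 := by
    nlinarith [Real.sq_sqrt h0, Real.sqrt_nonneg (pns A b C d)]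
  have n1 : (0:ℝ) ≤ ∑ ι, ∑ η, A ι η ^ 2 := by positivity
  have n2 : (0:ℝ) ≤ ∑ ι, b ι ^ 2 := by positivity
  have n3 : (0:ℝ) ≤ ∑ ν, ∑ ι, C ν ι ^ 2 := by positivity
  have n4 : (0:ℝ) ≤ ∑ ν, d ν ^ 2 := by positivity
  unfold pns at h1
  exact ⟨by linarith, by linarith, by linarith, by linarith⟩

lemma X_sq_bound {n k ℓ : ℕ} (hℓ : 1 ≤ ℓ) (σ : ℝ → ℝ) (hσ1 : ∀ t, σ t ^ 2 ≤ 1)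
    (S : Matrix (Fin n) (Fin n) ℝ) (A : Matrix (Fin ℓ) (UIdx n) ℝ) (b : Fin ℓ → ℝ)
    (C : Matrix (Fin (n * k)) (Fin ℓ) ℝ) (d : Fin (n * k) → ℝ) {D : ℝ}
    (hC : (∑ ν, ∑ ι, C ν ι ^ 2) ≤ D ^ 2) (hd : (∑ ν, d ν ^ 2) ≤ D ^ 2) :
    ∑ ν, Xv σ S A b C d ν ^ 2 ≤ 4 * ℓ * D ^ 2 := by
  have hℓ1 : (1:ℝ) ≤ (ℓ:ℝ) := by exact_mod_cast hℓ
  have hD2 : (0:ℝ) ≤ D ^ 2 := sq_nonneg D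
  have hpt : ∀ ν, Xv σ S A b C d ν ^ 2 ≤ 2 * (ℓ:ℝ) * (∑ i, C ν i ^ 2) + 2 * d ν ^ 2 := by
    intro ν
    have hXd : Xv σ S A b C d ν = (∑ i, C ν i * σ (Zv S A b i)) + d ν := by
      simp [Xv, Matrix.mulVec, dotProduct]
    have hcs := Finset.sum_mul_sq_le_sq_mul_sq Finset.univ
      (fun i => C ν i) (fun i => σ (Zv S A b i))
    have hσs : ∑ i, σ (Zv S A b i) ^ 2 ≤ (ℓ:ℝ) := by
      calc ∑ i, σ (Zv S A b i) ^ 2 ≤ ∑ _i : Fin ℓ, (1:ℝ) :=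
            Finset.sum_le_sum fun i _ => hσ1 _
        _ = (ℓ:ℝ) := by simp
    have hCnn : (0:ℝ) ≤ ∑ i, C ν i ^ 2 := by positivity
    rw [hXd]
    linarith [hcs, sq_nonneg ((∑ i, C ν i * σ (Zv S A b i)) - d ν),
      mul_le_mul_of_nonneg_left hσs hCnn]
  calc ∑ ν, Xv σ S A b C d ν ^ 2
      ≤ ∑ ν, (2 * (ℓ:ℝ) * (∑ i, C ν i ^ 2) + 2 * d ν ^ 2) :=
        Finset.sum_le_sum fun ν _ => hpt ν
    _ = 2 * (ℓ:ℝ) * (∑ ν, ∑ i, C ν i ^ 2) + 2 * ∑ ν, d ν ^ 2 := by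
        rw [Finset.sum_add_distrib, ← Finset.mul_sum, ← Finset.mul_sum]
    _ ≤ 4 * ℓ * D ^ 2 := by
        have e1 : 2 * (ℓ:ℝ) * (∑ ν, ∑ i, C ν i ^ 2) ≤ 2 * (ℓ:ℝ) * D ^ 2 :=
          mul_le_mul_of_nonneg_left hC (by linarith)
        linarith [e1, mul_nonneg (sub_nonneg.2 hℓ1) hD2]

lemma w_sq_bound {n k : ℕ} (ρ : Fin n → Fin n → ℝ) (hρ : ∀ i j, ρ i j ^ 2 ≤ 1)
    (X : Fin (n * k) → ℝ) {XB : ℝ} (hX : ∑ ν, X ν ^ 2 ≤ XB) :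
    ∑ i, ∑ s, (∑ j, ρ i j * X (fidx j s)) ^ 2 ≤ (n:ℝ) ^ 2 * XB := by
  have h1 := sum_sq_double ρ (fun j s => X (fidx j s))
  have hρ2 : ∑ i, ∑ j, ρ i j ^ 2 ≤ (n:ℝ) ^ 2 := by
    calc ∑ i, ∑ j, ρ i j ^ 2 ≤ ∑ _i : Fin n, ∑ _j : Fin n, (1:ℝ) :=
          Finset.sum_le_sum fun i _ => Finset.sum_le_sum fun j _ => hρ i j
      _ = (n:ℝ) ^ 2 := by
          simp [Finset.sum_const, Finset.card_univ]
          ring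
  have hXp : ∑ j, ∑ s, X (fidx j s) ^ 2 ≤ XB := by
    rw [sum_fidx (F := fun ν => X ν ^ 2)]; exact hX
  have hXpnn : (0:ℝ) ≤ ∑ j, ∑ s, X (fidx j s) ^ 2 := by positivity
  calc ∑ i, ∑ s, (∑ j, ρ i j * X (fidx j s)) ^ 2
      ≤ (∑ i, ∑ j, ρ i j ^ 2) * (∑ j, ∑ s, X (fidx j s) ^ 2) := h1
    _ ≤ (n:ℝ) ^ 2 * XB := mul_le_mul hρ2 hXp hXpnn (by positivity)

lemma sum_sq_lip {α : Type*} [Fintype α] {f f' : ℝ → ℝ}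
    (hd : ∀ t, HasDerivAt f (f' t) t) {K : ℝ} (hK : ∀ t, |f' t| ≤ K)
    (u v : α → ℝ) {B : ℝ} (hB : ∑ a, (u a - v a) ^ 2 ≤ B) :
    ∑ a, (f (u a) - f (v a)) ^ 2 ≤ K ^ 2 * B := by
  calc ∑ a, (f (u a) - f (v a)) ^ 2
      ≤ ∑ a, K ^ 2 * (u a - v a) ^ 2 :=
        Finset.sum_le_sum fun a _ => sq_lip hd hK _ _
    _ = K ^ 2 * ∑ a, (u a - v a) ^ 2 := by rw [Finset.mul_sum]
    _ ≤ K ^ 2 * B := mul_le_mul_of_nonneg_left hB (sq_nonneg K)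

lemma sum_sq_lip2 {α β : Type*} [Fintype α] [Fintype β] {f f' : ℝ → ℝ}
    (hd : ∀ t, HasDerivAt f (f' t) t) {K : ℝ} (hK : ∀ t, |f' t| ≤ K)
    (u v : α → β → ℝ) {B : ℝ} (hB : ∑ a, ∑ b, (u a b - v a b) ^ 2 ≤ B) :
    ∑ a, ∑ b, (f (u a b) - f (v a b)) ^ 2 ≤ K ^ 2 * B := by
  have h := sum_sq_lip hd hK (fun p : α × β => u p.1 p.2) (fun p => v p.1 p.2)
    (B := B) (by simpa [Fintype.sum_prod_type] using hB)
  simpa [Fintype.sum_prod_type] using h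


set_option maxHeartbeats 40000000 in
/-- Lemma 4 of the paper: the map `Θ ↦ ∂φ̃/∂b` is Lipschitz on the ball of
radius `D`, with Lipschitz constant `L_b` satisfying
`L_b² ≤ C_b n² D² max{ℓ D² L_Z², ℓ² D⁶ L_Z², ℓ³ D⁴, n ℓ}`, where the constant
`C_b` depends only on `σ'_max`, `σ''_max` and `μ''_max`. -/
theorem stmt_4 (σ'max σ''max μ''max : ℝ) :
    ∃ Cb : ℝ, 0 < Cb ∧
      ∀ (n k ℓ : ℕ), 1 ≤ n → 1 ≤ k → 1 ≤ ℓ →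
      ∀ (σ σ' σ'' μ μ' μ'' : ℝ → ℝ),
        (∀ t, HasDerivAt σ (σ' t) t) → (∀ t, HasDerivAt σ' (σ'' t) t) →
        (∀ t, σ t ∈ Set.Icc (-1 : ℝ) 1) →
        (∀ t, |σ' t| ≤ σ'max) → (∀ t, |σ'' t| ≤ σ''max) →
        (∀ t, HasDerivAt μ (μ' t) t) → (∀ t, HasDerivAt μ' (μ'' t) t) →
        (∀ t, 0 ≤ μ t) → (∀ t, |μ' t| ≤ 1) → (∀ t, |μ'' t| ≤ μ''max) →
      ∀ (S : Matrix (Fin n) (Fin n) ℝ), S.IsSymm →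
      ∀ D : ℝ, 0 < D →
      ∃ Lb : ℝ, 0 ≤ Lb ∧
        Lb ^ 2 ≤ Cb * (n : ℝ) ^ 2 * D ^ 2 *
          max (max ((ℓ : ℝ) * D ^ 2 * (1 + ∑ p : UIdx n, hv S p ^ 2))
              ((ℓ : ℝ) ^ 2 * D ^ 6 * (1 + ∑ p : UIdx n, hv S p ^ 2)))
            (max ((ℓ : ℝ) ^ 3 * D ^ 4) ((n : ℝ) * (ℓ : ℝ))) ∧
        ∀ (A Abar : Matrix (Fin ℓ) (UIdx n) ℝ) (b bbar : Fin ℓ → ℝ)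
          (C Cbar : Matrix (Fin (n * k)) (Fin ℓ) ℝ) (d dbar : Fin (n * k) → ℝ),
          Real.sqrt (pns A b C d) ≤ D → Real.sqrt (pns Abar bbar Cbar dbar) ≤ D →
          Real.sqrt (∑ ι, (gbv σ μ S A b C d ι - gbv σ μ S Abar bbar Cbar dbar ι) ^ 2) ≤
            Lb * Real.sqrt (pns (A - Abar) (b - bbar) (C - Cbar) (d - dbar)) := by
  have hsm1 : (1:ℝ) ≤ max σ'max 1 := le_max_right _ _
  have hs21 : (1:ℝ) ≤ max σ''max 1 := le_max_right _ _
  have hmm1 : (1:ℝ) ≤ max μ''max 1 := le_max_right _ _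
  set sm := max σ'max 1 with hsmdef
  set s2 := max σ''max 1 with hs2def
  set mm := max μ''max 1 with hmmdef
  have h2sm : (1:ℝ) ≤ sm ^ 2 := by nlinarith
  have h4sm : (1:ℝ) ≤ sm ^ 4 := by nlinarith
  have h2s2 : (1:ℝ) ≤ s2 ^ 2 := by nlinarith
  have h2mm : (1:ℝ) ≤ mm ^ 2 := by nlinarith
  have hms : (1:ℝ) ≤ mm ^ 2 * sm ^ 4 := by nlinarith
  refine ⟨65536 * mm ^ 2 * sm ^ 4 * s2 ^ 2, by nlinarith, ?_⟩
  intro n k ℓ hn hk hℓ σ σ' σ'' μ μ' μ'' hσd hσ'd hσI hσ'B hσ''B hμd hμ'd hμ0 hμ'B hμ''B S hSsym D hD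
  have hn1 : (1:ℝ) ≤ (n:ℝ) := by exact_mod_cast hn
  have hℓ1 : (1:ℝ) ≤ (ℓ:ℝ) := by exact_mod_cast hℓ
  have hℓ0 : (0:ℝ) ≤ (ℓ:ℝ) := by linarith only [hℓ1]
  have hD2 : (0:ℝ) ≤ D ^ 2 := sq_nonneg D
  have hσ'sm : ∀ t, |σ' t| ≤ sm := fun t => (hσ'B t).trans (le_max_left _ _)
  have hσ''s2 : ∀ t, |σ'' t| ≤ s2 := fun t => (hσ''B t).trans (le_max_left _ _)
  have hμ''mm : ∀ t, |μ'' t| ≤ mm := fun t => (hμ''B t).trans (le_max_left _ _)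
  have hσ1 : ∀ t, σ t ^ 2 ≤ 1 := fun t => by
    have h := hσI t
    simp only [Set.mem_Icc] at h
    nlinarith [h.1, h.2]
  have hμ'1 : ∀ t, μ' t ^ 2 ≤ 1 := fun t => sq_le_one_of_abs_le_one (hμ'B t)
  have hσ'sq : ∀ t, σ' t ^ 2 ≤ sm ^ 2 := fun t => sq_le_sq_of_abs_le (hσ'sm t)
  set hS2 := ∑ p : UIdx n, hv S p ^ 2 with hS2def
  have hS2nn : (0:ℝ) ≤ hS2 := by rw [hS2def]; positivity
  set L2 := 1 + hS2 with hL2def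
  have hL21 : (1:ℝ) ≤ L2 := by rw [hL2def]; linarith only [hS2nn]
  have hL20 : (0:ℝ) ≤ L2 := by linarith only [hL21]
  set M := max (max ((ℓ:ℝ) * D ^ 2 * L2) ((ℓ:ℝ) ^ 2 * D ^ 6 * L2))
    (max ((ℓ:ℝ) ^ 3 * D ^ 4) ((n:ℝ) * (ℓ:ℝ))) with hMdef
  have hM1 : (ℓ:ℝ) * D ^ 2 * L2 ≤ M := le_trans (le_max_left _ _) (le_max_left _ _)
  have hM2 : (ℓ:ℝ) ^ 2 * D ^ 6 * L2 ≤ M := le_trans (le_max_right _ _) (le_max_left _ _)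
  have hM3 : (ℓ:ℝ) ^ 3 * D ^ 4 ≤ M := le_trans (le_max_left _ _) (le_max_right _ _)
  have hM4 : (n:ℝ) * (ℓ:ℝ) ≤ M := le_trans (le_max_right _ _) (le_max_right _ _)
  have hM0 : (0:ℝ) ≤ M := le_trans (by positivity) hM4
  have hPnn : (0:ℝ) ≤ 65536 * mm ^ 2 * sm ^ 4 * s2 ^ 2 * (n:ℝ) ^ 2 * D ^ 2 * M :=
    mul_nonneg (by positivity) hM0
  refine ⟨Real.sqrt (65536 * mm ^ 2 * sm ^ 4 * s2 ^ 2 * (n:ℝ) ^ 2 * D ^ 2 * M),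
    Real.sqrt_nonneg _, le_of_eq (Real.sq_sqrt hPnn), ?_⟩
  intro A Abar b bbar C Cbar d dbar hTh hThb
  obtain ⟨hA2, hb2, hC2, hd2⟩ := pns_comps A b C d hTh
  obtain ⟨hAb2, hbb2, hCb2, hdb2⟩ := pns_comps Abar bbar Cbar dbar hThb
  set dsq := pns (A - Abar) (b - bbar) (C - Cbar) (d - dbar) with hdsqdef
  have hdsq0 : (0:ℝ) ≤ dsq := by rw [hdsqdef]; unfold pns; positivity
  have hrefl : Real.sqrt (pns (A - Abar) (b - bbar) (C - Cbar) (d - dbar)) ≤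
      Real.sqrt dsq := by rw [hdsqdef]
  obtain ⟨hdA, hdb, hdC, hdd⟩ := pns_comps (A - Abar) (b - bbar) (C - Cbar) (d - dbar) hrefl
  rw [Real.sq_sqrt hdsq0] at hdA hdb hdC hdd
  have hdA' : ∑ ι, ∑ η, (A ι η - Abar ι η) ^ 2 ≤ dsq := by
    simpa [Matrix.sub_apply] using hdA
  have hdb' : ∑ ι, (b ι - bbar ι) ^ 2 ≤ dsq := by simpa using hdb
  have hdC' : ∑ ν, ∑ ι, (C ν ι - Cbar ν ι) ^ 2 ≤ dsq := by
    simpa [Matrix.sub_apply] using hdC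
  have hdd' : ∑ ν, (d ν - dbar ν) ^ 2 ≤ dsq := by simpa using hdd
  -- X norm bounds
  have hXB : ∑ ν, Xv σ S A b C d ν ^ 2 ≤ 4 * (ℓ:ℝ) * D ^ 2 :=
    X_sq_bound hℓ σ hσ1 S A b C d hC2 hd2
  have hXbB : ∑ ν, Xv σ S Abar bbar Cbar dbar ν ^ 2 ≤ 4 * (ℓ:ℝ) * D ^ 2 :=
    X_sq_bound hℓ σ hσ1 S Abar bbar Cbar dbar hCb2 hdb2
  -- Z difference
  have hZid : ∀ ι, Zv S A b ι - Zv S Abar bbar ι =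
      (∑ η, (A ι η - Abar ι η) * hv S η) + (b ι - bbar ι) := by
    intro ι
    simp only [Zv, Matrix.mulVec, dotProduct, sub_mul, Finset.sum_sub_distrib]
    ring
  have hdZ : ∑ ι, (Zv S A b ι - Zv S Abar bbar ι) ^ 2 ≤ 2 * L2 * dsq := by
    have h1 := two_split (fun ι => ∑ η, (A ι η - Abar ι η) * hv S η)
      (fun ι => b ι - bbar ι)
    have h2 := sum_sq_mulsum (fun ι η => A ι η - Abar ι η) (hv S)
    have h3 : (∑ ι, ∑ η, (A ι η - Abar ι η) ^ 2) * (∑ η, hv S η ^ 2) ≤ dsq * hS2 := by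
      rw [hS2def]
      exact mul_le_mul_of_nonneg_right hdA' (by positivity)
    calc ∑ ι, (Zv S A b ι - Zv S Abar bbar ι) ^ 2
        = ∑ ι, ((∑ η, (A ι η - Abar ι η) * hv S η) + (b ι - bbar ι)) ^ 2 :=
          Finset.sum_congr rfl fun ι _ => by rw [hZid ι]
      _ ≤ 2 * (∑ ι, (∑ η, (A ι η - Abar ι η) * hv S η) ^ 2)
          + 2 * ∑ ι, (b ι - bbar ι) ^ 2 := h1
      _ ≤ 2 * L2 * dsq := by
          have h4 := le_trans h2 h3
          rw [hL2def]
          linarith only [h4, hdb']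
  have hdσZ : ∑ i, (σ (Zv S A b i) - σ (Zv S Abar bbar i)) ^ 2 ≤ sm ^ 2 * (2 * L2 * dsq) :=
    sum_sq_lip hσd hσ'sm _ _ hdZ
  have hdσ'Z : ∑ ι, (σ' (Zv S A b ι) - σ' (Zv S Abar bbar ι)) ^ 2 ≤ s2 ^ 2 * (2 * L2 * dsq) :=
    sum_sq_lip hσ'd hσ''s2 _ _ hdZ
  set E := D ^ 2 * L2 + (ℓ:ℝ) with hEdef
  have hE0 : (0:ℝ) ≤ E := by
    have h := mul_nonneg hD2 hL20
    rw [hEdef]; linarith only [h, hℓ0]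
  -- X difference
  have hXid : ∀ ν, Xv σ S A b C d ν - Xv σ S Abar bbar Cbar dbar ν =
      (∑ i, C ν i * (σ (Zv S A b i) - σ (Zv S Abar bbar i)))
      + (∑ i, (C ν i - Cbar ν i) * σ (Zv S Abar bbar i))
      + (d ν - dbar ν) := by
    intro ν
    simp only [Xv, Matrix.mulVec, dotProduct, mul_sub, sub_mul,
      Finset.sum_sub_distrib, Finset.sum_add_distrib]
    ring
  have hσsb : ∑ i, σ (Zv S Abar bbar i) ^ 2 ≤ (ℓ:ℝ) := by
    calc ∑ i, σ (Zv S Abar bbar i) ^ 2 ≤ ∑ _i : Fin ℓ, (1:ℝ) :=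
          Finset.sum_le_sum fun i _ => hσ1 _
      _ = (ℓ:ℝ) := by simp
  have hdX : ∑ ν, (Xv σ S A b C d ν - Xv σ S Abar bbar Cbar dbar ν) ^ 2
      ≤ 6 * sm ^ 2 * E * dsq := by
    have h1 := three_split
      (fun ν => ∑ i, C ν i * (σ (Zv S A b i) - σ (Zv S Abar bbar i)))
      (fun ν => ∑ i, (C ν i - Cbar ν i) * σ (Zv S Abar bbar i))
      (fun ν => d ν - dbar ν)
    have h2 := sum_sq_mulsum (fun ν i => C ν i)
      (fun i => σ (Zv S A b i) - σ (Zv S Abar bbar i))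
    have h3 := sum_sq_mulsum (fun ν i => C ν i - Cbar ν i) (fun i => σ (Zv S Abar bbar i))
    have e2 : ∑ ν, (∑ i, C ν i * (σ (Zv S A b i) - σ (Zv S Abar bbar i))) ^ 2
        ≤ D ^ 2 * (sm ^ 2 * (2 * L2 * dsq)) :=
      le_trans h2 (mul_le_mul hC2 hdσZ (by positivity) hD2)
    have e3 : ∑ ν, (∑ i, (C ν i - Cbar ν i) * σ (Zv S Abar bbar i)) ^ 2
        ≤ dsq * (ℓ:ℝ) :=
      le_trans h3 (mul_le_mul hdC' hσsb (by positivity) hdsq0)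
    calc ∑ ν, (Xv σ S A b C d ν - Xv σ S Abar bbar Cbar dbar ν) ^ 2
        = ∑ ν, ((∑ i, C ν i * (σ (Zv S A b i) - σ (Zv S Abar bbar i)))
            + (∑ i, (C ν i - Cbar ν i) * σ (Zv S Abar bbar i))
            + (d ν - dbar ν)) ^ 2 :=
          Finset.sum_congr rfl fun ν _ => by rw [hXid ν]
      _ ≤ 3 * (∑ ν, (∑ i, C ν i * (σ (Zv S A b i) - σ (Zv S Abar bbar i))) ^ 2)
          + 3 * (∑ ν, (∑ i, (C ν i - Cbar ν i) * σ (Zv S Abar bbar i)) ^ 2)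
          + 3 * ∑ ν, (d ν - dbar ν) ^ 2 := h1
      _ ≤ 6 * sm ^ 2 * E * dsq := by
          rw [hEdef]
          linarith only [e2, e3, hdd',
            mul_nonneg (sub_nonneg.2 h2sm) (mul_nonneg hℓ0 hdsq0),
            mul_nonneg (sub_nonneg.2 hℓ1) hdsq0]
  -- double-indexed X sums
  have hdXp : ∑ i, ∑ s, (Xv σ S A b C d (fidx i s)
      - Xv σ S Abar bbar Cbar dbar (fidx i s)) ^ 2 ≤ 6 * sm ^ 2 * E * dsq := by
    rw [sum_fidx (F := fun ν => (Xv σ S A b C d ν - Xv σ S Abar bbar Cbar dbar ν) ^ 2)]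
    exact hdX
  have hXpB : ∑ i, ∑ s, Xv σ S A b C d (fidx i s) ^ 2 ≤ 4 * (ℓ:ℝ) * D ^ 2 := by
    rw [sum_fidx (F := fun ν => Xv σ S A b C d ν ^ 2)]; exact hXB
  have hXbpB : ∑ i, ∑ s, Xv σ S Abar bbar Cbar dbar (fidx i s) ^ 2 ≤ 4 * (ℓ:ℝ) * D ^ 2 := by
    rw [sum_fidx (F := fun ν => Xv σ S Abar bbar Cbar dbar ν ^ 2)]; exact hXbB
  have h6nn : (0:ℝ) ≤ 6 * sm ^ 2 * E * dsq :=
    mul_nonneg (mul_nonneg (mul_nonneg (by norm_num) (sq_nonneg sm)) hE0) hdsq0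
  -- ω difference
  have hωid : ∀ i j, omE σ S A b C d i j - omE σ S Abar bbar Cbar dbar i j =
      (∑ s, (Xv σ S A b C d (fidx i s) - Xv σ S Abar bbar Cbar dbar (fidx i s))
        * Xv σ S A b C d (fidx j s))
      + ∑ s, Xv σ S Abar bbar Cbar dbar (fidx i s)
        * (Xv σ S A b C d (fidx j s) - Xv σ S Abar bbar Cbar dbar (fidx j s)) := by
    intro i j
    simp only [omE, sub_sub_sub_cancel_right]
    exact sum_mul_diff _ _ _ _
  have hdω : ∑ i, ∑ j, (omE σ S A b C d i j - omE σ S Abar bbar Cbar dbar i j) ^ 2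
      ≤ 96 * sm ^ 2 * (ℓ:ℝ) * D ^ 2 * E * dsq := by
    have h1 := two_split2
      (fun i j => ∑ s, (Xv σ S A b C d (fidx i s) - Xv σ S Abar bbar Cbar dbar (fidx i s))
        * Xv σ S A b C d (fidx j s))
      (fun i j => ∑ s, Xv σ S Abar bbar Cbar dbar (fidx i s)
        * (Xv σ S A b C d (fidx j s) - Xv σ S Abar bbar Cbar dbar (fidx j s)))
    have h2 := sum_sq_pair
      (fun i s => Xv σ S A b C d (fidx i s) - Xv σ S Abar bbar Cbar dbar (fidx i s))
      (fun j s => Xv σ S A b C d (fidx j s))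
    have h3 := sum_sq_pair
      (fun i s => Xv σ S Abar bbar Cbar dbar (fidx i s))
      (fun j s => Xv σ S A b C d (fidx j s) - Xv σ S Abar bbar Cbar dbar (fidx j s))
    have e2 := le_trans h2 (mul_le_mul hdXp hXpB (by positivity) h6nn)
    have e3 := le_trans h3 (mul_le_mul hXbpB hdXp (by positivity) (by positivity))
    calc ∑ i, ∑ j, (omE σ S A b C d i j - omE σ S Abar bbar Cbar dbar i j) ^ 2
        = ∑ i, ∑ j,
            ((∑ s, (Xv σ S A b C d (fidx i s) - Xv σ S Abar bbar Cbar dbar (fidx i s))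
              * Xv σ S A b C d (fidx j s))
            + ∑ s, Xv σ S Abar bbar Cbar dbar (fidx i s)
              * (Xv σ S A b C d (fidx j s) - Xv σ S Abar bbar Cbar dbar (fidx j s))) ^ 2 :=
          Finset.sum_congr rfl fun i _ => Finset.sum_congr rfl fun j _ => by rw [hωid i j]
      _ ≤ 2 * (∑ i, ∑ j, (∑ s, (Xv σ S A b C d (fidx i s)
              - Xv σ S Abar bbar Cbar dbar (fidx i s)) * Xv σ S A b C d (fidx j s)) ^ 2)
          + 2 * ∑ i, ∑ j, (∑ s, Xv σ S Abar bbar Cbar dbar (fidx i s)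
              * (Xv σ S A b C d (fidx j s) - Xv σ S Abar bbar Cbar dbar (fidx j s))) ^ 2 := h1
      _ ≤ 96 * sm ^ 2 * (ℓ:ℝ) * D ^ 2 * E * dsq := by linarith only [e2, e3]
  have hdρ : ∑ i, ∑ j, (μ' (omE σ S A b C d i j) - μ' (omE σ S Abar bbar Cbar dbar i j)) ^ 2
      ≤ mm ^ 2 * (96 * sm ^ 2 * (ℓ:ℝ) * D ^ 2 * E * dsq) :=
    sum_sq_lip2 hμ'd hμ''mm _ _ hdω
  -- w bounds
  have hwB : ∑ i, ∑ s, wf σ μ' S A b C d i s ^ 2 ≤ (n:ℝ) ^ 2 * (4 * (ℓ:ℝ) * D ^ 2) := by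
    have h := w_sq_bound (fun i j => μ' (omE σ S A b C d i j)) (fun i j => hμ'1 _)
      (Xv σ S A b C d) hXB
    simpa [wf] using h
  have hwgB : ∑ j, ∑ s, wg σ μ' S A b C d j s ^ 2 ≤ (n:ℝ) ^ 2 * (4 * (ℓ:ℝ) * D ^ 2) := by
    have h := w_sq_bound (fun j i => μ' (omE σ S A b C d i j)) (fun j i => hμ'1 _)
      (Xv σ S A b C d) hXB
    simpa [wg] using h
  -- ρbar bounds
  have hρb2 : ∑ i, ∑ j, μ' (omE σ S Abar bbar Cbar dbar i j) ^ 2 ≤ (n:ℝ) ^ 2 := by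
    calc ∑ i, ∑ j, μ' (omE σ S Abar bbar Cbar dbar i j) ^ 2
        ≤ ∑ _i : Fin n, ∑ _j : Fin n, (1:ℝ) :=
          Finset.sum_le_sum fun i _ => Finset.sum_le_sum fun j _ => hμ'1 _
      _ = (n:ℝ) ^ 2 := by
          simp [Finset.sum_const, Finset.card_univ]
          ring
  have hρb2' : ∑ j, ∑ i, μ' (omE σ S Abar bbar Cbar dbar i j) ^ 2 ≤ (n:ℝ) ^ 2 := by
    rw [Finset.sum_comm]; exact hρb2
  have hdρ' : ∑ j, ∑ i, (μ' (omE σ S A b C d i j)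
      - μ' (omE σ S Abar bbar Cbar dbar i j)) ^ 2
      ≤ mm ^ 2 * (96 * sm ^ 2 * (ℓ:ℝ) * D ^ 2 * E * dsq) := by
    rw [Finset.sum_comm]; exact hdρ
  have hdωB : (0:ℝ) ≤ mm ^ 2 * (96 * sm ^ 2 * (ℓ:ℝ) * D ^ 2 * E * dsq) :=
    mul_nonneg (sq_nonneg mm) (mul_nonneg (mul_nonneg (mul_nonneg (mul_nonneg
      (mul_nonneg (by norm_num) (sq_nonneg sm)) hℓ0) hD2) hE0) hdsq0)
  -- Δw bounds
  have hdwkey : 2 * (mm ^ 2 * (96 * sm ^ 2 * (ℓ:ℝ) * D ^ 2 * E * dsq)) * (4 * (ℓ:ℝ) * D ^ 2)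
      + 2 * ((n:ℝ) ^ 2 * (6 * sm ^ 2 * E * dsq))
      ≤ 768 * mm ^ 2 * sm ^ 2 * E * ((ℓ:ℝ) ^ 2 * D ^ 4 + (n:ℝ) ^ 2) * dsq := by
    have t : (0:ℝ) ≤ sm ^ 2 * E * (n:ℝ) ^ 2 * dsq :=
      mul_nonneg (mul_nonneg (mul_nonneg (sq_nonneg sm) hE0) (sq_nonneg (n:ℝ))) hdsq0
    linarith only [t, mul_nonneg (sub_nonneg.2 h2mm) t]
  have hdwf : ∑ i, ∑ s, (wf σ μ' S A b C d i s - wf σ μ' S Abar bbar Cbar dbar i s) ^ 2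
      ≤ 768 * mm ^ 2 * sm ^ 2 * E * ((ℓ:ℝ) ^ 2 * D ^ 4 + (n:ℝ) ^ 2) * dsq := by
    have hpt : ∀ i s, wf σ μ' S A b C d i s - wf σ μ' S Abar bbar Cbar dbar i s =
        (∑ j, (μ' (omE σ S A b C d i j) - μ' (omE σ S Abar bbar Cbar dbar i j))
          * Xv σ S A b C d (fidx j s))
        + ∑ j, μ' (omE σ S Abar bbar Cbar dbar i j)
          * (Xv σ S A b C d (fidx j s) - Xv σ S Abar bbar Cbar dbar (fidx j s)) := by
      intro i s
      simp only [wf]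
      exact sum_mul_diff _ _ _ _
    have h1 := two_split2
      (fun i s => ∑ j, (μ' (omE σ S A b C d i j) - μ' (omE σ S Abar bbar Cbar dbar i j))
        * Xv σ S A b C d (fidx j s))
      (fun i s => ∑ j, μ' (omE σ S Abar bbar Cbar dbar i j)
        * (Xv σ S A b C d (fidx j s) - Xv σ S Abar bbar Cbar dbar (fidx j s)))
    have h2 := sum_sq_double
      (fun i j => μ' (omE σ S A b C d i j) - μ' (omE σ S Abar bbar Cbar dbar i j))
      (fun j s => Xv σ S A b C d (fidx j s))
    have h3 := sum_sq_double
      (fun i j => μ' (omE σ S Abar bbar Cbar dbar i j))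
      (fun j s => Xv σ S A b C d (fidx j s) - Xv σ S Abar bbar Cbar dbar (fidx j s))
    have e2 := le_trans h2 (mul_le_mul hdρ hXpB (by positivity) hdωB)
    have e3 := le_trans h3 (mul_le_mul hρb2 hdXp (by positivity) (by positivity))
    calc ∑ i, ∑ s, (wf σ μ' S A b C d i s - wf σ μ' S Abar bbar Cbar dbar i s) ^ 2
        = ∑ i, ∑ s,
            ((∑ j, (μ' (omE σ S A b C d i j) - μ' (omE σ S Abar bbar Cbar dbar i j))
              * Xv σ S A b C d (fidx j s))
            + ∑ j, μ' (omE σ S Abar bbar Cbar dbar i j)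
              * (Xv σ S A b C d (fidx j s) - Xv σ S Abar bbar Cbar dbar (fidx j s))) ^ 2 :=
          Finset.sum_congr rfl fun i _ => Finset.sum_congr rfl fun s _ => by rw [hpt i s]
      _ ≤ 2 * (∑ i, ∑ s, (∑ j, (μ' (omE σ S A b C d i j)
              - μ' (omE σ S Abar bbar Cbar dbar i j)) * Xv σ S A b C d (fidx j s)) ^ 2)
          + 2 * ∑ i, ∑ s, (∑ j, μ' (omE σ S Abar bbar Cbar dbar i j)
              * (Xv σ S A b C d (fidx j s) - Xv σ S Abar bbar Cbar dbar (fidx j s))) ^ 2 := h1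
      _ ≤ 768 * mm ^ 2 * sm ^ 2 * E * ((ℓ:ℝ) ^ 2 * D ^ 4 + (n:ℝ) ^ 2) * dsq := by
          linarith only [e2, e3, hdwkey]
  have hdwg : ∑ j, ∑ s, (wg σ μ' S A b C d j s - wg σ μ' S Abar bbar Cbar dbar j s) ^ 2
      ≤ 768 * mm ^ 2 * sm ^ 2 * E * ((ℓ:ℝ) ^ 2 * D ^ 4 + (n:ℝ) ^ 2) * dsq := by
    have hpt : ∀ j s, wg σ μ' S A b C d j s - wg σ μ' S Abar bbar Cbar dbar j s =
        (∑ i, (μ' (omE σ S A b C d i j) - μ' (omE σ S Abar bbar Cbar dbar i j))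
          * Xv σ S A b C d (fidx i s))
        + ∑ i, μ' (omE σ S Abar bbar Cbar dbar i j)
          * (Xv σ S A b C d (fidx i s) - Xv σ S Abar bbar Cbar dbar (fidx i s)) := by
      intro j s
      simp only [wg]
      exact sum_mul_diff _ _ _ _
    have h1 := two_split2
      (fun j s => ∑ i, (μ' (omE σ S A b C d i j) - μ' (omE σ S Abar bbar Cbar dbar i j))
        * Xv σ S A b C d (fidx i s))
      (fun j s => ∑ i, μ' (omE σ S Abar bbar Cbar dbar i j)
        * (Xv σ S A b C d (fidx i s) - Xv σ S Abar bbar Cbar dbar (fidx i s)))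
    have h2 := sum_sq_double
      (fun j i => μ' (omE σ S A b C d i j) - μ' (omE σ S Abar bbar Cbar dbar i j))
      (fun i s => Xv σ S A b C d (fidx i s))
    have h3 := sum_sq_double
      (fun j i => μ' (omE σ S Abar bbar Cbar dbar i j))
      (fun i s => Xv σ S A b C d (fidx i s) - Xv σ S Abar bbar Cbar dbar (fidx i s))
    have e2 := le_trans h2 (mul_le_mul hdρ' hXpB (by positivity) hdωB)
    have e3 := le_trans h3 (mul_le_mul hρb2' hdXp (by positivity) (by positivity))
    calc ∑ j, ∑ s, (wg σ μ' S A b C d j s - wg σ μ' S Abar bbar Cbar dbar j s) ^ 2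
        = ∑ j, ∑ s,
            ((∑ i, (μ' (omE σ S A b C d i j) - μ' (omE σ S Abar bbar Cbar dbar i j))
              * Xv σ S A b C d (fidx i s))
            + ∑ i, μ' (omE σ S Abar bbar Cbar dbar i j)
              * (Xv σ S A b C d (fidx i s) - Xv σ S Abar bbar Cbar dbar (fidx i s))) ^ 2 :=
          Finset.sum_congr rfl fun j _ => Finset.sum_congr rfl fun s _ => by rw [hpt j s]
      _ ≤ 2 * (∑ j, ∑ s, (∑ i, (μ' (omE σ S A b C d i j)
              - μ' (omE σ S Abar bbar Cbar dbar i j)) * Xv σ S A b C d (fidx i s)) ^ 2)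
          + 2 * ∑ j, ∑ s, (∑ i, μ' (omE σ S Abar bbar Cbar dbar i j)
              * (Xv σ S A b C d (fidx i s) - Xv σ S Abar bbar Cbar dbar (fidx i s))) ^ 2 := h1
      _ ≤ 768 * mm ^ 2 * sm ^ 2 * E * ((ℓ:ℝ) ^ 2 * D ^ 4 + (n:ℝ) ^ 2) * dsq := by
          linarith only [e2, e3, hdwkey]
  -- column sums of C
  have hcol : ∀ ι : Fin ℓ, ∑ i, ∑ s, C (fidx i s) ι ^ 2 ≤ D ^ 2 := by
    intro ι
    rw [sum_fidx (F := fun ν => C ν ι ^ 2)]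
    calc ∑ ν, C ν ι ^ 2 ≤ ∑ ν, ∑ ι', C ν ι' ^ 2 :=
          Finset.sum_le_sum fun ν _ =>
            Finset.single_le_sum (f := fun ι' => C ν ι' ^ 2)
              (fun ι' _ => sq_nonneg _) (Finset.mem_univ ι)
      _ ≤ D ^ 2 := hC2
  have hcolΔ : ∑ ι, ∑ i, ∑ s, (C (fidx i s) ι - Cbar (fidx i s) ι) ^ 2 ≤ dsq := by
    calc ∑ ι, ∑ i, ∑ s, (C (fidx i s) ι - Cbar (fidx i s) ι) ^ 2
        = ∑ ι, ∑ ν, (C ν ι - Cbar ν ι) ^ 2 :=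
          Finset.sum_congr rfl fun ι _ => sum_fidx (F := fun ν => (C ν ι - Cbar ν ι) ^ 2)
      _ = ∑ ν, ∑ ι, (C ν ι - Cbar ν ι) ^ 2 := Finset.sum_comm
      _ ≤ dsq := hdC'
  have hcolCb : ∑ ι, ∑ i, ∑ s, Cbar (fidx i s) ι ^ 2 ≤ D ^ 2 := by
    calc ∑ ι, ∑ i, ∑ s, Cbar (fidx i s) ι ^ 2
        = ∑ ι, ∑ ν, Cbar ν ι ^ 2 :=
          Finset.sum_congr rfl fun ι _ => sum_fidx (F := fun ν => Cbar ν ι ^ 2)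
      _ = ∑ ν, ∑ ι, Cbar ν ι ^ 2 := Finset.sum_comm
      _ ≤ D ^ 2 := hCb2
  -- pointwise bound on W
  have hW2 : ∀ ι, Wf σ μ' S A b C d ι ^ 2 ≤ 16 * (n:ℝ) ^ 2 * (ℓ:ℝ) * D ^ 4 := by
    intro ι
    have hq1 := le_trans
      (cs_double (fun i s => C (fidx i s) ι) (fun i s => wf σ μ' S A b C d i s))
      (mul_le_mul (hcol ι) hwB (by positivity) hD2)
    have hq2 := le_trans
      (cs_double (fun i s => C (fidx i s) ι) (fun i s => wg σ μ' S A b C d i s))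
      (mul_le_mul (hcol ι) hwgB (by positivity) hD2)
    have hWeq : Wf σ μ' S A b C d ι =
        (∑ i, ∑ s, C (fidx i s) ι * wf σ μ' S A b C d i s)
        + ∑ j, ∑ s, C (fidx j s) ι * wg σ μ' S A b C d j s := rfl
    rw [hWeq]
    linarith only [hq1, hq2, sq_nonneg ((∑ i, ∑ s, C (fidx i s) ι * wf σ μ' S A b C d i s)
      - ∑ j, ∑ s, C (fidx j s) ι * wg σ μ' S A b C d j s)]
  -- gradient identity
  have hgid : ∀ ι, gbv σ μ S A b C d ι - gbv σ μ S Abar bbar Cbar dbar ι =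
      (σ' (Zv S A b ι) - σ' (Zv S Abar bbar ι)) * Wf σ μ' S A b C d ι
      + σ' (Zv S Abar bbar ι)
        * (Wf σ μ' S A b C d ι - Wf σ μ' S Abar bbar Cbar dbar ι) := by
    intro ι
    rw [gbv_W σ σ' μ μ' hσd hμd S A b C d ι,
      gbv_W σ σ' μ μ' hσd hμd S Abar bbar Cbar dbar ι]
    ring
  have hTa : ∑ ι, ((σ' (Zv S A b ι) - σ' (Zv S Abar bbar ι)) * Wf σ μ' S A b C d ι) ^ 2
      ≤ s2 ^ 2 * (2 * L2 * dsq) * (16 * (n:ℝ) ^ 2 * (ℓ:ℝ) * D ^ 4) := by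
    calc ∑ ι, ((σ' (Zv S A b ι) - σ' (Zv S Abar bbar ι)) * Wf σ μ' S A b C d ι) ^ 2
        = ∑ ι, (σ' (Zv S A b ι) - σ' (Zv S Abar bbar ι)) ^ 2 * Wf σ μ' S A b C d ι ^ 2 :=
          Finset.sum_congr rfl fun ι _ => mul_pow _ _ 2
      _ ≤ ∑ ι, (σ' (Zv S A b ι) - σ' (Zv S Abar bbar ι)) ^ 2
            * (16 * (n:ℝ) ^ 2 * (ℓ:ℝ) * D ^ 4) :=
          Finset.sum_le_sum fun ι _ => mul_le_mul_of_nonneg_left (hW2 ι) (sq_nonneg _)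
      _ = (∑ ι, (σ' (Zv S A b ι) - σ' (Zv S Abar bbar ι)) ^ 2)
            * (16 * (n:ℝ) ^ 2 * (ℓ:ℝ) * D ^ 4) := by rw [← Finset.sum_mul]
      _ ≤ s2 ^ 2 * (2 * L2 * dsq) * (16 * (n:ℝ) ^ 2 * (ℓ:ℝ) * D ^ 4) :=
          mul_le_mul_of_nonneg_right hdσ'Z (by positivity)
  -- ΔW identity
  have hWid : ∀ ι, Wf σ μ' S A b C d ι - Wf σ μ' S Abar bbar Cbar dbar ι =
      ((∑ i, ∑ s, (C (fidx i s) ι - Cbar (fidx i s) ι) * wf σ μ' S A b C d i s)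
        + ∑ i, ∑ s, Cbar (fidx i s) ι
          * (wf σ μ' S A b C d i s - wf σ μ' S Abar bbar Cbar dbar i s))
      + ((∑ j, ∑ s, (C (fidx j s) ι - Cbar (fidx j s) ι) * wg σ μ' S A b C d j s)
        + ∑ j, ∑ s, Cbar (fidx j s) ι
          * (wg σ μ' S A b C d j s - wg σ μ' S Abar bbar Cbar dbar j s)) := by
    intro ι
    have e1 := sum_mul_diff2 (fun i s => C (fidx i s) ι) (fun i s => Cbar (fidx i s) ι)
      (fun i s => wf σ μ' S A b C d i s) (fun i s => wf σ μ' S Abar bbar Cbar dbar i s)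
    have e2 := sum_mul_diff2 (fun j s => C (fidx j s) ι) (fun j s => Cbar (fidx j s) ι)
      (fun j s => wg σ μ' S A b C d j s) (fun j s => wg σ μ' S Abar bbar Cbar dbar j s)
    simp only [Wf]
    linarith only [e1, e2]
  -- U bounds
  have hU1 := le_trans
    (sum_sq_mulsum2 (fun ι i s => C (fidx i s) ι - Cbar (fidx i s) ι)
      (fun i s => wf σ μ' S A b C d i s))
    (mul_le_mul hcolΔ hwB (by positivity) hdsq0)
  have hU2 := le_trans
    (sum_sq_mulsum2 (fun ι i s => Cbar (fidx i s) ι)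
      (fun i s => wf σ μ' S A b C d i s - wf σ μ' S Abar bbar Cbar dbar i s))
    (mul_le_mul hcolCb hdwf (by positivity) hD2)
  have hU1' := le_trans
    (sum_sq_mulsum2 (fun ι j s => C (fidx j s) ι - Cbar (fidx j s) ι)
      (fun j s => wg σ μ' S A b C d j s))
    (mul_le_mul hcolΔ hwgB (by positivity) hdsq0)
  have hU2' := le_trans
    (sum_sq_mulsum2 (fun ι j s => Cbar (fidx j s) ι)
      (fun j s => wg σ μ' S A b C d j s - wg σ μ' S Abar bbar Cbar dbar j s))
    (mul_le_mul hcolCb hdwg (by positivity) hD2)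
  -- ΔW sum bound
  have hWs1 := two_split
    (fun ι => (∑ i, ∑ s, (C (fidx i s) ι - Cbar (fidx i s) ι) * wf σ μ' S A b C d i s)
      + ∑ i, ∑ s, Cbar (fidx i s) ι
        * (wf σ μ' S A b C d i s - wf σ μ' S Abar bbar Cbar dbar i s))
    (fun ι => (∑ j, ∑ s, (C (fidx j s) ι - Cbar (fidx j s) ι) * wg σ μ' S A b C d j s)
      + ∑ j, ∑ s, Cbar (fidx j s) ι
        * (wg σ μ' S A b C d j s - wg σ μ' S Abar bbar Cbar dbar j s))
  have hWs2 := two_split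
    (fun ι => ∑ i, ∑ s, (C (fidx i s) ι - Cbar (fidx i s) ι) * wf σ μ' S A b C d i s)
    (fun ι => ∑ i, ∑ s, Cbar (fidx i s) ι
      * (wf σ μ' S A b C d i s - wf σ μ' S Abar bbar Cbar dbar i s))
  have hWs3 := two_split
    (fun ι => ∑ j, ∑ s, (C (fidx j s) ι - Cbar (fidx j s) ι) * wg σ μ' S A b C d j s)
    (fun ι => ∑ j, ∑ s, Cbar (fidx j s) ι
      * (wg σ μ' S A b C d j s - wg σ μ' S Abar bbar Cbar dbar j s))
  have hdWsum : ∑ ι, (Wf σ μ' S A b C d ι - Wf σ μ' S Abar bbar Cbar dbar ι) ^ 2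
      ≤ 4 * (dsq * ((n:ℝ) ^ 2 * (4 * (ℓ:ℝ) * D ^ 2)))
        + 4 * (D ^ 2 * (768 * mm ^ 2 * sm ^ 2 * E * ((ℓ:ℝ) ^ 2 * D ^ 4 + (n:ℝ) ^ 2) * dsq))
        + 4 * (dsq * ((n:ℝ) ^ 2 * (4 * (ℓ:ℝ) * D ^ 2)))
        + 4 * (D ^ 2 * (768 * mm ^ 2 * sm ^ 2 * E * ((ℓ:ℝ) ^ 2 * D ^ 4 + (n:ℝ) ^ 2) * dsq)) := by
    calc ∑ ι, (Wf σ μ' S A b C d ι - Wf σ μ' S Abar bbar Cbar dbar ι) ^ 2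
        = ∑ ι, (((∑ i, ∑ s, (C (fidx i s) ι - Cbar (fidx i s) ι) * wf σ μ' S A b C d i s)
            + ∑ i, ∑ s, Cbar (fidx i s) ι
              * (wf σ μ' S A b C d i s - wf σ μ' S Abar bbar Cbar dbar i s))
          + ((∑ j, ∑ s, (C (fidx j s) ι - Cbar (fidx j s) ι) * wg σ μ' S A b C d j s)
            + ∑ j, ∑ s, Cbar (fidx j s) ι
              * (wg σ μ' S A b C d j s - wg σ μ' S Abar bbar Cbar dbar j s))) ^ 2 :=
          Finset.sum_congr rfl fun ι _ => by rw [hWid ι]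
      _ ≤ _ := by linarith only [hWs1, hWs2, hWs3, hU1, hU2, hU1', hU2']
  have hTb : ∑ ι, (σ' (Zv S Abar bbar ι)
      * (Wf σ μ' S A b C d ι - Wf σ μ' S Abar bbar Cbar dbar ι)) ^ 2
      ≤ sm ^ 2 * ∑ ι, (Wf σ μ' S A b C d ι - Wf σ μ' S Abar bbar Cbar dbar ι) ^ 2 := by
    calc ∑ ι, (σ' (Zv S Abar bbar ι)
          * (Wf σ μ' S A b C d ι - Wf σ μ' S Abar bbar Cbar dbar ι)) ^ 2
        = ∑ ι, σ' (Zv S Abar bbar ι) ^ 2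
            * (Wf σ μ' S A b C d ι - Wf σ μ' S Abar bbar Cbar dbar ι) ^ 2 :=
          Finset.sum_congr rfl fun ι _ => mul_pow _ _ 2
      _ ≤ ∑ ι, sm ^ 2 * (Wf σ μ' S A b C d ι - Wf σ μ' S Abar bbar Cbar dbar ι) ^ 2 :=
          Finset.sum_le_sum fun ι _ =>
            mul_le_mul_of_nonneg_right (hσ'sq _) (sq_nonneg _)
      _ = sm ^ 2 * ∑ ι, (Wf σ μ' S A b C d ι - Wf σ μ' S Abar bbar Cbar dbar ι) ^ 2 := by
          rw [← Finset.mul_sum]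
  have hsplitg := two_split
    (fun ι => (σ' (Zv S A b ι) - σ' (Zv S Abar bbar ι)) * Wf σ μ' S A b C d ι)
    (fun ι => σ' (Zv S Abar bbar ι)
      * (Wf σ μ' S A b C d ι - Wf σ μ' S Abar bbar Cbar dbar ι))
  have hg0 : ∑ ι, (gbv σ μ S A b C d ι - gbv σ μ S Abar bbar Cbar dbar ι) ^ 2
      = ∑ ι, ((σ' (Zv S A b ι) - σ' (Zv S Abar bbar ι)) * Wf σ μ' S A b C d ι
        + σ' (Zv S Abar bbar ι)
          * (Wf σ μ' S A b C d ι - Wf σ μ' S Abar bbar Cbar dbar ι)) ^ 2 :=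
    Finset.sum_congr rfl fun ι _ => by rw [hgid ι]
  -- numeric comparisons
  have hNP : (0:ℝ) ≤ (n:ℝ) ^ 2 * D ^ 2 * M :=
    mul_nonneg (mul_nonneg (sq_nonneg _) hD2) hM0
  have c1 : (n:ℝ) ^ 2 * (ℓ:ℝ) * D ^ 4 * L2 ≤ (n:ℝ) ^ 2 * D ^ 2 * M := by
    have h := mul_le_mul_of_nonneg_left hM1 (mul_nonneg (sq_nonneg (n:ℝ)) hD2)
    linarith only [h]
  have c2 : (n:ℝ) ^ 2 * (ℓ:ℝ) * D ^ 2 ≤ (n:ℝ) ^ 2 * D ^ 2 * M := by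
    have hnl : (0:ℝ) ≤ ((n:ℝ) - 1) * (ℓ:ℝ) :=
      mul_nonneg (by linarith only [hn1]) hℓ0
    have hl : (ℓ:ℝ) ≤ M :=
      le_trans (by linarith only [hnl] : (ℓ:ℝ) ≤ (n:ℝ) * (ℓ:ℝ)) hM4
    have h := mul_le_mul_of_nonneg_left hl (mul_nonneg (sq_nonneg (n:ℝ)) hD2)
    linarith only [h]
  have c3 : D ^ 2 * E * ((ℓ:ℝ) ^ 2 * D ^ 4 + (n:ℝ) ^ 2) ≤ 4 * ((n:ℝ) ^ 2 * D ^ 2 * M) := by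
    have hn2 : (1:ℝ) ≤ (n:ℝ) ^ 2 := by linarith only [sq_nonneg ((n:ℝ) - 1), hn1]
    have hDM : (0:ℝ) ≤ D ^ 2 * M := mul_nonneg hD2 hM0
    have t1 : D ^ 2 * ((ℓ:ℝ) ^ 2 * D ^ 6 * L2) ≤ D ^ 2 * M := mul_le_mul_of_nonneg_left hM2 hD2
    have t2 : D ^ 2 * ((ℓ:ℝ) ^ 3 * D ^ 4) ≤ D ^ 2 * M := mul_le_mul_of_nonneg_left hM3 hD2
    have t3a := mul_le_mul_of_nonneg_left hM1 (mul_nonneg (sq_nonneg (n:ℝ)) hD2)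
    have t3b : (n:ℝ) ^ 2 * D ^ 4 * L2 ≤ (n:ℝ) ^ 2 * D ^ 2 * ((ℓ:ℝ) * D ^ 2 * L2) := by
      have hp : (0:ℝ) ≤ ((ℓ:ℝ) - 1) * ((n:ℝ) ^ 2 * D ^ 4 * L2) :=
        mul_nonneg (by linarith only [hℓ1]) (mul_nonneg (by positivity) hL20)
      linarith only [hp]
    have t4 := mul_nonneg (sub_nonneg.2 hn2) hDM
    rw [hEdef]
    linarith only [t1, t2, t3a, t3b, t4, c2]
  -- coefficient inequality
  have hms0 : (0:ℝ) ≤ mm ^ 2 * sm ^ 4 := by positivity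
  have q1 : 64 * s2 ^ 2 ≤ 64 * (mm ^ 2 * sm ^ 4) * s2 ^ 2 := by
    linarith only [mul_nonneg (sub_nonneg.2 hms) (sq_nonneg s2)]
  have q2 : 64 * sm ^ 2 ≤ 64 * (mm ^ 2 * sm ^ 4) * s2 ^ 2 := by
    have r1 : sm ^ 2 ≤ sm ^ 4 := by
      linarith only [mul_nonneg (sub_nonneg.2 h2sm) (sq_nonneg sm)]
    have r2 : sm ^ 4 ≤ mm ^ 2 * sm ^ 4 := by
      linarith only [mul_nonneg (sub_nonneg.2 h2mm) (by positivity : (0:ℝ) ≤ sm ^ 4)]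
    have r3 : mm ^ 2 * sm ^ 4 ≤ mm ^ 2 * sm ^ 4 * s2 ^ 2 := by
      linarith only [mul_nonneg (sub_nonneg.2 h2s2) hms0]
    linarith only [r1, r2, r3]
  have q3 : 49152 * (mm ^ 2 * sm ^ 4) ≤ 49152 * (mm ^ 2 * sm ^ 4) * s2 ^ 2 := by
    linarith only [mul_nonneg (sub_nonneg.2 h2s2) hms0]
  -- final assembly
  have m1 : s2 ^ 2 * (2 * L2 * dsq) * (16 * (n:ℝ) ^ 2 * (ℓ:ℝ) * D ^ 4)
      ≤ 32 * s2 ^ 2 * dsq * ((n:ℝ) ^ 2 * D ^ 2 * M) := by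
    have h := mul_le_mul_of_nonneg_left c1
      (mul_nonneg (mul_nonneg (by norm_num : (0:ℝ) ≤ 32) (sq_nonneg s2)) hdsq0)
    linarith only [h]
  have m2 : dsq * ((n:ℝ) ^ 2 * (4 * (ℓ:ℝ) * D ^ 2))
      ≤ 4 * dsq * ((n:ℝ) ^ 2 * D ^ 2 * M) := by
    have h := mul_le_mul_of_nonneg_left c2
      (mul_nonneg (by norm_num : (0:ℝ) ≤ 4) hdsq0)
    linarith only [h]
  have m3 : D ^ 2 * (768 * mm ^ 2 * sm ^ 2 * E * ((ℓ:ℝ) ^ 2 * D ^ 4 + (n:ℝ) ^ 2) * dsq)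
      ≤ 3072 * mm ^ 2 * sm ^ 2 * dsq * ((n:ℝ) ^ 2 * D ^ 2 * M) := by
    have h := mul_le_mul_of_nonneg_left c3
      (mul_nonneg (mul_nonneg (mul_nonneg (by norm_num : (0:ℝ) ≤ 768) (sq_nonneg mm))
        (sq_nonneg sm)) hdsq0)
    linarith only [h]
  have msm2 : sm ^ 2 * (∑ ι, (Wf σ μ' S A b C d ι - Wf σ μ' S Abar bbar Cbar dbar ι) ^ 2)
      ≤ sm ^ 2 * (8 * (4 * dsq * ((n:ℝ) ^ 2 * D ^ 2 * M))
        + 8 * (3072 * mm ^ 2 * sm ^ 2 * dsq * ((n:ℝ) ^ 2 * D ^ 2 * M))) := by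
    refine mul_le_mul_of_nonneg_left ?_ (sq_nonneg sm)
    linarith only [hdWsum, m2, m3]
  have msm3 : sm ^ 2 * (8 * (4 * dsq * ((n:ℝ) ^ 2 * D ^ 2 * M))
        + 8 * (3072 * mm ^ 2 * sm ^ 2 * dsq * ((n:ℝ) ^ 2 * D ^ 2 * M)))
      ≤ (32 * sm ^ 2 + 24576 * mm ^ 2 * sm ^ 4) * (dsq * ((n:ℝ) ^ 2 * D ^ 2 * M)) :=
    le_of_eq (by ring)
  have hfinal : ∑ ι, (gbv σ μ S A b C d ι - gbv σ μ S Abar bbar Cbar dbar ι) ^ 2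
      ≤ 65536 * mm ^ 2 * sm ^ 4 * s2 ^ 2 * (n:ℝ) ^ 2 * D ^ 2 * M * dsq := by
    have hcoef : 64 * s2 ^ 2 + 64 * sm ^ 2 + 49152 * (mm ^ 2 * sm ^ 4)
        ≤ 65536 * (mm ^ 2 * sm ^ 4) * s2 ^ 2 := by
      linarith only [q1, q2, q3, mul_nonneg hms0 (sq_nonneg s2)]
    have hfin := mul_le_mul_of_nonneg_right hcoef (mul_nonneg hdsq0 hNP)
    linarith only [hg0, hsplitg, hTa, hTb, msm2, msm3, m1, hfin]
  calc Real.sqrt (∑ ι, (gbv σ μ S A b C d ι - gbv σ μ S Abar bbar Cbar dbar ι) ^ 2)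
      ≤ Real.sqrt (65536 * mm ^ 2 * sm ^ 4 * s2 ^ 2 * (n:ℝ) ^ 2 * D ^ 2 * M * dsq) :=
        Real.sqrt_le_sqrt hfinal
    _ = Real.sqrt (65536 * mm ^ 2 * sm ^ 4 * s2 ^ 2 * (n:ℝ) ^ 2 * D ^ 2 * M)
        * Real.sqrt dsq := Real.sqrt_mul hPnn dsq
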